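/- For a bounded C-symmetric operator T on a complex Hilbert space H, ‖T‖ = sup over unit vectors u of |⟨T u, C u⟩|. -/

import Mathlib

open scoped ComplexConjugate

local notation "⟪" x ", " y "⟫" => @inner ℂ _ _ x y

/-- For a bounded `C`-symmetric operator, `‖T‖` is the supremum of `|⟨Tu, Cu⟩|`
over unit vectors `u`. -/
theorem norm_eq_sup_bilinear_form {H : Type*} [NormedAddCommGroup H]
    [InnerProductSpace ℂ H] [CompleteSpace H] [Nontrivial H] (C : H → H)
    (hadd : ∀ f g, C (f + g) = C f + C g)
    (hsmul : ∀ (c : ℂ) (f : H), C (c • f) = conj c • C f)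
    (hinv : ∀ f, C (C f) = f)
    (hinner : ∀ f g, ⟪C f, C g⟫ = ⟪g, f⟫)
    (T : H →L[ℂ] H)
    (hsym : ∀ f, T f = C (ContinuousLinearMap.adjoint T (C f))) :
    ‖T‖ = sSup {r : ℝ | ∃ u : H, ‖u‖ = 1 ∧ r = ‖⟪T u, C u⟫‖} := by
  set S := {r : ℝ | ∃ u : H, ‖u‖ = 1 ∧ r = ‖⟪T u, C u⟫‖} with hSdef
  -- C preserves norms
  have hCnorm : ∀ f : H, ‖C f‖ = ‖f‖ := by
    intro f
    have h1 : (⟪C f, C f⟫ : ℂ) = ⟪f, f⟫ := hinner f f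
    rw [inner_self_eq_norm_sq_to_K, inner_self_eq_norm_sq_to_K] at h1
    have h2 : (‖C f‖ : ℝ) ^ 2 = ‖f‖ ^ 2 := by exact_mod_cast h1
    nlinarith [norm_nonneg (C f), norm_nonneg f]
  -- symmetry of the bilinear form
  have hsymm : ∀ u v : H, ⟪T u, C v⟫ = ⟪T v, C u⟫ := by
    intro u v
    calc ⟪T u, C v⟫ = ⟪C (ContinuousLinearMap.adjoint T (C u)), C v⟫ := by rw [← hsym]
      _ = ⟪v, ContinuousLinearMap.adjoint T (C u)⟫ := hinner _ _
      _ = ⟪T v, C u⟫ := ContinuousLinearMap.adjoint_inner_right T v (C u)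
  -- every element of S is bounded by ‖T‖
  have hub : ∀ r ∈ S, r ≤ ‖T‖ := by
    rintro r ⟨u, hu, rfl⟩
    calc ‖⟪T u, C u⟫‖ = ‖(⟪T u, C u⟫ : ℂ)‖ := rfl
      _ ≤ ‖T u‖ * ‖C u‖ := norm_inner_le_norm _ _
      _ ≤ (‖T‖ * ‖u‖) * ‖u‖ := by
          rw [hCnorm]
          exact mul_le_mul_of_nonneg_right (T.le_opNorm u) (norm_nonneg u)
      _ = ‖T‖ := by rw [hu]; ring
  have hbdd : BddAbove S := ⟨‖T‖, hub⟩
  -- S is nonempty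
  obtain ⟨x, hx⟩ := exists_ne (0 : H)
  have hxu : ‖(‖x‖⁻¹ • x : H)‖ = 1 := norm_smul_inv_norm hx
  have hne : S.Nonempty := ⟨_, ⟨_, hxu, rfl⟩⟩
  set M := sSup S with hM
  have hM0 : 0 ≤ M := le_trans (norm_nonneg _) (le_csSup hbdd ⟨_, hxu, rfl⟩)
  -- scaling bound: |⟪Tw, Cw⟫| ≤ M * ‖w‖²
  have hkey : ∀ w : H, ‖⟪T w, C w⟫‖ ≤ M * ‖w‖ ^ 2 := by
    intro w
    rcases eq_or_ne w 0 with rfl | hw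
    · simp
    · have hwn : (‖w‖ : ℝ) ≠ 0 := norm_ne_zero_iff.mpr hw
      have hwnC : ((‖w‖ : ℂ)) ≠ 0 := by exact_mod_cast hwn
      set u : H := ((‖w‖ : ℂ))⁻¹ • w with hu
      have hun : ‖u‖ = 1 := by
        rw [hu, norm_smul, norm_inv]
        simp [hwn]
      have hwu : w = (‖w‖ : ℂ) • u := by
        rw [hu, smul_smul, mul_inv_cancel₀ hwnC, one_smul]
      have hc : ⟪T w, C w⟫ = (‖w‖ : ℂ) ^ 2 * ⟪T u, C u⟫ := by
        conv_lhs => rw [hwu]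
        rw [map_smul, hsmul, inner_smul_left, inner_smul_right]
        simp only [Complex.conj_ofReal]
        ring
      have : ‖⟪T u, C u⟫‖ ≤ M := le_csSup hbdd ⟨u, hun, rfl⟩
      rw [hc, norm_mul]
      have habs : ‖((‖w‖ : ℂ) ^ 2)‖ = ‖w‖ ^ 2 := by
        rw [norm_pow, Complex.norm_real, Real.norm_eq_abs, abs_of_nonneg (norm_nonneg w)]
      rw [habs, mul_comm]
      exact mul_le_mul_of_nonneg_right this (by positivity)
  -- C is subtraction-preserving
  have hsub : ∀ f g : H, C (f - g) = C f - C g := by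
    intro f g
    have hneg : C (-g) = -(C g) := by
      have := hsmul (-1 : ℂ) g
      simpa using this
    rw [sub_eq_add_neg, hadd, hneg, sub_eq_add_neg]
  -- ‖T u‖ ≤ M for unit u
  have hTu : ∀ u : H, ‖u‖ = 1 → ‖T u‖ ≤ M := by
    intro u hu
    rcases eq_or_ne (T u) 0 with h0 | h0
    · rw [h0, norm_zero]; exact hM0
    · set v : H := ((‖T u‖ : ℂ)⁻¹) • C (T u) with hv
      have hTn : (‖T u‖ : ℝ) ≠ 0 := norm_ne_zero_iff.mpr h0
      have hvn : ‖v‖ = 1 := by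
        rw [hv, norm_smul, hCnorm]
        simp [hTn]
      have hCv : C v = ((‖T u‖ : ℂ)⁻¹) • T u := by
        rw [hv, hsmul, hinv]
        congr 1
        rw [← Complex.ofReal_inv, Complex.conj_ofReal]
      have hTnC : ((‖T u‖ : ℂ)) ≠ 0 := by exact_mod_cast hTn
      have hTuv : ⟪T u, C v⟫ = (‖T u‖ : ℂ) := by
        rw [hCv, inner_smul_right, inner_self_eq_norm_sq_to_K]
        field_simp
        rfl
      have hpol : ⟪T (u + v), C (u + v)⟫ - ⟪T (u - v), C (u - v)⟫ = 4 * ⟪T u, C v⟫ := by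
        rw [hadd u v, hsub u v, map_add, map_sub]
        rw [inner_add_left, inner_add_right, inner_add_right,
          inner_sub_left, inner_sub_right, inner_sub_right, hsymm v u]
        ring
      have h4 : (4 : ℝ) * ‖T u‖ ≤ M * ‖u + v‖ ^ 2 + M * ‖u - v‖ ^ 2 := by
        have := hpol
        calc (4 : ℝ) * ‖T u‖ = ‖4 * ⟪T u, C v⟫‖ := by
              rw [norm_mul, hTuv]
              simp [Complex.norm_real, abs_of_nonneg (norm_nonneg (T u))]
          _ = ‖⟪T (u + v), C (u + v)⟫ - ⟪T (u - v), C (u - v)⟫‖ := by rw [hpol]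
          _ ≤ ‖⟪T (u + v), C (u + v)⟫‖ + ‖⟪T (u - v), C (u - v)⟫‖ :=
              norm_sub_le _ _
          _ ≤ M * ‖u + v‖ ^ 2 + M * ‖u - v‖ ^ 2 := add_le_add (hkey _) (hkey _)
      have hpar : ‖u + v‖ ^ 2 + ‖u - v‖ ^ 2 = 4 := by
        have := parallelogram_law_with_norm ℂ u v
        nlinarith [this, hu, hvn]
      nlinarith [h4, hpar]
  -- conclude ‖T‖ ≤ M
  have hle : ‖T‖ ≤ M := by
    apply ContinuousLinearMap.opNorm_le_bound T hM0
    intro x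
    rcases eq_or_ne x 0 with rfl | hx0
    · simp
    · have hxn : (‖x‖ : ℝ) ≠ 0 := norm_ne_zero_iff.mpr hx0
      have h1 : ‖(((‖x‖ : ℂ))⁻¹ • x : H)‖ = 1 := by
        rw [norm_smul, norm_inv]
        simp [hxn]
      have h2 := hTu _ h1
      rw [map_smul, norm_smul, norm_inv] at h2
      simp only [Complex.norm_real, Real.norm_eq_abs, abs_of_nonneg (norm_nonneg x)] at h2
      calc ‖T x‖ = ‖x‖ * (‖x‖⁻¹ * ‖T x‖) := by field_simp
        _ ≤ ‖x‖ * M := mul_le_mul_of_nonneg_left h2 (norm_nonneg x)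
        _ = M * ‖x‖ := mul_comm _ _
  exact le_antisymm hle (Real.sSup_le hub (norm_nonneg T))
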